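/- In a windmill graph W_{k,m} (m copies of K_{k+1} sharing one central vertex), every second-order stationary point of the Kuramoto energy is synchronous: all phasors coincide. -/

import Mathlib

open Real Classical

noncomputable section

/-- Real-valued adjacency indicator of a simple graph. -/
def adjW {V : Type*} (G : SimpleGraph V) (i j : V) : ℝ := if G.Adj i j then 1 else 0

/-- The phasor (unit vector in the plane) associated with an angle. -/
def phasor (t : ℝ) : ℝ × ℝ := (Real.cos t, Real.sin t)

/-- The Kuramoto energy. -/
def kEnergy {V : Type*} [Fintype V] (G : SimpleGraph V) (θ : V → ℝ) : ℝ :=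
  (1 / 2) * ∑ i, ∑ j, adjW G i j * (1 - Real.cos (θ i - θ j))

/-- The Hessian of the Kuramoto energy. -/
def kHess {V : Type*} [Fintype V] (G : SimpleGraph V) (θ : V → ℝ) : Matrix V V ℝ :=
  fun i j =>
    if i = j then ∑ k, adjW G i k * Real.cos (θ i - θ k)
    else -(adjW G i j * Real.cos (θ i - θ j))

/-- First-order (equilibrium) condition of the homogeneous Kuramoto model. -/
def IsEquilibrium {V : Type*} [Fintype V] (G : SimpleGraph V) (θ : V → ℝ) : Prop :=
  ∀ i, ∑ j, adjW G i j * Real.sin (θ j - θ i) = 0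

/-- Second-order stationary point of the Kuramoto energy. -/
def IsSOSP {V : Type*} [Fintype V] (G : SimpleGraph V) (θ : V → ℝ) : Prop :=
  IsEquilibrium G θ ∧ (kHess G θ).PosSemidef

/-- The windmill graph `W_{k,m}`: `m` cliques, each on `k+1` vertices (one clique
vertex being the shared center `none`). -/
def windmill (k m : ℕ) : SimpleGraph (Option (Fin m × Fin k)) where
  Adj x y := x ≠ y ∧ ∀ a i b j, x = some (a, i) → y = some (b, j) → a = b
  symm := by
    constructor
    intro x y h
    exact ⟨h.1.symm, fun a i b j hx hy => (h.2 b j a i hy hx).symm⟩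
  loopless := by
    constructor
    intro x h
    exact h.1 rfl

section Helpers
open Matrix

lemma adjW_self {V : Type*} (G : SimpleGraph V) (i : V) : adjW G i i = 0 := by
  simp [adjW]

lemma adjW_comm {V : Type*} (G : SimpleGraph V) (i j : V) : adjW G i j = adjW G j i := by
  simp [adjW, G.adj_comm]

lemma qform {V : Type*} [Fintype V] (G : SimpleGraph V) (θ x : V → ℝ) :
    x ⬝ᵥ ((kHess G θ) *ᵥ x)
      = (1/2) * ∑ i, ∑ j, adjW G i j * Real.cos (θ i - θ j) * (x i - x j)^2 := by
  classical
  set A : V → V → ℝ := fun i j => adjW G i j * Real.cos (θ i - θ j) with hA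
  have hsym : ∀ i j, A i j = A j i := by
    intro i j
    simp only [hA]
    rw [← Real.cos_neg (θ i - θ j), neg_sub, adjW_comm]
  have hAself : ∀ i, A i i = 0 := by intro i; simp [hA, adjW_self]
  have hmul : ∀ i, ((kHess G θ) *ᵥ x) i
      = (∑ j, A i j) * x i - ∑ j, A i j * x j := by
    intro i
    simp only [Matrix.mulVec, dotProduct, kHess]
    have : ∀ j, (if i = j then (∑ l, adjW G i l * Real.cos (θ i - θ l))
          else -(adjW G i j * Real.cos (θ i - θ j))) * x j
        = (if i = j then ((∑ l, A i l) + A i j) * x j else 0) - A i j * x j := by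
      intro j
      by_cases h : i = j
      · simp [h, hA]; ring
      · simp [h, hA]
    rw [Finset.sum_congr rfl (fun j _ => this j), Finset.sum_sub_distrib,
      Finset.sum_ite_eq]
    simp [hAself]
  have lhs : x ⬝ᵥ ((kHess G θ) *ᵥ x)
      = ∑ i, ∑ j, (A i j * (x i)^2 - A i j * (x i * x j)) := by
    simp only [dotProduct]
    refine Finset.sum_congr rfl fun i _ => ?_
    rw [hmul i, mul_sub, mul_left_comm, Finset.sum_mul, Finset.mul_sum,
      ← Finset.sum_sub_distrib]
    exact Finset.sum_congr rfl fun j _ => by ring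
  have swap : ∑ i, ∑ j, A i j * (x j)^2 = ∑ i, ∑ j, A i j * (x i)^2 := by
    rw [Finset.sum_comm]
    exact Finset.sum_congr rfl fun i _ => Finset.sum_congr rfl fun j _ => by
      rw [hsym j i]
  rw [lhs]
  have rhs : (1/2 : ℝ) * ∑ i, ∑ j, A i j * (x i - x j)^2
      = (1/2) * ((∑ i, ∑ j, A i j * (x i)^2) + (∑ i, ∑ j, A i j * (x j)^2)
          - 2 * ∑ i, ∑ j, A i j * (x i * x j)) := by
    congr 1
    rw [← Finset.sum_add_distrib, Finset.mul_sum, ← Finset.sum_sub_distrib]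
    refine Finset.sum_congr rfl fun i _ => ?_
    rw [← Finset.sum_add_distrib, Finset.mul_sum, ← Finset.sum_sub_distrib]
    exact Finset.sum_congr rfl fun j _ => by ring
  rw [rhs, swap]
  simp only [Finset.sum_sub_distrib]
  ring

lemma windmill_adjW_some_none {k m : ℕ} (p : Fin m × Fin k) :
    adjW (windmill k m) (some p) none = 1 := by
  simp [adjW, windmill]

lemma windmill_adjW_none_some {k m : ℕ} (p : Fin m × Fin k) :
    adjW (windmill k m) none (some p) = 1 := by
  simp [adjW, windmill]

lemma windmill_adjW_none_none {k m : ℕ} :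
    adjW (windmill k m) (none : Option (Fin m × Fin k)) none = 0 := by
  simp [adjW]

lemma windmill_adjW_some_some {k m : ℕ} (a b : Fin m) (i j : Fin k) :
    adjW (windmill k m) (some (a, i)) (some (b, j))
      = if b = a then (if j = i then 0 else 1) else 0 := by
  by_cases hb : b = a
  · subst hb
    by_cases hj : j = i
    · subst hj; simp [adjW]
    · have hadj : (windmill k m).Adj (some (b, i)) (some (b, j)) := by
        refine ⟨?_, ?_⟩
        · simp only [ne_eq, Option.some.injEq, Prod.mk.injEq, not_and]
          intro _ h
          exact hj h.symm
        · intro a' i' b' j' h1 h2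
          simp only [Option.some.injEq, Prod.mk.injEq] at h1 h2
          rw [← h1.1, ← h2.1]
      simp only [if_pos rfl, if_neg hj, adjW, if_pos hadj]
      simp
  · have hnadj : ¬ (windmill k m).Adj (some (a, i)) (some (b, j)) := by
      rintro ⟨-, h⟩
      exact hb (h a i b j rfl rfl).symm
    simp only [if_neg hb, adjW, if_neg hnadj]

lemma windmill_nbr_sum {k m : ℕ} (a : Fin m) (i : Fin k)
    (f : Option (Fin m × Fin k) → ℝ) (hf : f (some (a, i)) = 0) :
    ∑ v, adjW (windmill k m) (some (a, i)) v * f v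
      = f none + ∑ j, f (some (a, j)) := by
  classical
  rw [Fintype.sum_option]
  rw [windmill_adjW_some_none, one_mul]
  congr 1
  rw [Fintype.sum_prod_type]
  have hpt : ∀ b : Fin m,
      (∑ j, adjW (windmill k m) (some (a, i)) (some (b, j)) * f (some (b, j)))
        = if b = a then ∑ j, (if j = i then 0 else 1) * f (some (b, j)) else 0 := by
    intro b
    by_cases hb : b = a
    · subst hb
      rw [if_pos rfl]
      exact Finset.sum_congr rfl fun j _ => by rw [windmill_adjW_some_some, if_pos rfl]
    · rw [if_neg hb]
      refine Finset.sum_eq_zero fun j _ => by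
        rw [windmill_adjW_some_some, if_neg hb, zero_mul]
  rw [Finset.sum_congr rfl fun b _ => hpt b, Finset.sum_ite_eq' Finset.univ a]
  rw [if_pos (Finset.mem_univ a)]
  have : ∀ j : Fin k, (if j = i then 0 else 1) * f (some (a, j))
      = f (some (a, j)) - (if j = i then f (some (a, j)) else 0) := by
    intro j; by_cases hj : j = i <;> simp [hj]
  rw [Finset.sum_congr rfl fun j _ => this j, Finset.sum_sub_distrib,
    Finset.sum_ite_eq' Finset.univ i, if_pos (Finset.mem_univ i), hf, sub_zero]

lemma windmill_sum_expand {k m : ℕ} (f : Option (Fin m × Fin k) → Option (Fin m × Fin k) → ℝ)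
    (hdiag : ∀ p, f (some p) (some p) = 0) :
    ∑ u, ∑ v, adjW (windmill k m) u v * f u v
      = (∑ p, (f none (some p) + f (some p) none))
        + ∑ b, ∑ i, ∑ j, f (some (b, i)) (some (b, j)) := by
  classical
  rw [Fintype.sum_option]
  have hnone : ∑ v, adjW (windmill k m) none v * f none v = ∑ p, f none (some p) := by
    rw [Fintype.sum_option, windmill_adjW_none_none, zero_mul, zero_add]
    exact Finset.sum_congr rfl fun p _ => by rw [windmill_adjW_none_some, one_mul]
  rw [hnone]
  have hsome : ∀ p : Fin m × Fin k,
      ∑ v, adjW (windmill k m) (some p) v * f (some p) v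
        = f (some p) none + ∑ j, f (some p) (some (p.1, j)) := by
    intro p
    exact windmill_nbr_sum p.1 p.2 (f (some p)) (hdiag p)
  rw [Finset.sum_congr rfl fun p _ => hsome p, Finset.sum_add_distrib, ← add_assoc,
    ← Finset.sum_add_distrib]
  congr 1
  exact Fintype.sum_prod_type (f := fun x => ∑ j, f (some x) (some (x.1, j)))

lemma key_eq {k m : ℕ} (θ : Option (Fin m × Fin k) → ℝ)
    (heq : IsEquilibrium (windmill k m) θ) (a : Fin m) (i : Fin k) :
    (Real.sin (θ none) + ∑ j, Real.sin (θ (some (a, j)))) * Real.cos (θ (some (a, i)))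
      = (Real.cos (θ none) + ∑ j, Real.cos (θ (some (a, j)))) * Real.sin (θ (some (a, i))) := by
  have h := heq (some (a, i))
  rw [windmill_nbr_sum a i _ (by simp)] at h
  simp only [Real.sin_sub] at h
  rw [Finset.sum_sub_distrib, ← Finset.sum_mul, ← Finset.sum_mul] at h
  linear_combination h

/-- A vector supported on the non-center vertices of blade `a`. -/
def bladeVec {k m : ℕ} (a : Fin m) (g : Fin k → ℝ) : Option (Fin m × Fin k) → ℝ :=
  fun v => Option.elim v 0 (fun p => if p.1 = a then g p.2 else 0)

@[simp] lemma bladeVec_none {k m : ℕ} (a : Fin m) (g : Fin k → ℝ) :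
    bladeVec a g none = 0 := rfl

@[simp] lemma bladeVec_some {k m : ℕ} (a b : Fin m) (g : Fin k → ℝ) (i : Fin k) :
    bladeVec a g (some (b, i)) = if b = a then g i else 0 := rfl

lemma F_blade_eval {k m : ℕ} (θ : Option (Fin m × Fin k) → ℝ) (a : Fin m) (g : Fin k → ℝ) :
    ∑ u, ∑ v, adjW (windmill k m) u v *
        (Real.cos (θ u - θ v) * (bladeVec a g u - bladeVec a g v)^2)
      = (∑ i, 2 * Real.cos (θ (some (a, i)) - θ none) * (g i)^2)
        + ∑ i, ∑ j, Real.cos (θ (some (a, i)) - θ (some (a, j))) * (g i - g j)^2 := by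
  classical
  rw [windmill_sum_expand _ (fun p => by simp)]
  congr 1
  · rw [Fintype.sum_prod_type]
    have hpt : ∀ b : Fin m,
        (∑ i, (Real.cos (θ none - θ (some (b, i))) * (bladeVec a g none - bladeVec a g (some (b, i)))^2
          + Real.cos (θ (some (b, i)) - θ none) * (bladeVec a g (some (b, i)) - bladeVec a g none)^2))
        = if b = a then ∑ i, 2 * Real.cos (θ (some (a, i)) - θ none) * (g i)^2 else 0 := by
      intro b
      by_cases hb : b = a
      · subst hb
        rw [if_pos rfl]
        refine Finset.sum_congr rfl fun i _ => ?_
        rw [bladeVec_none, bladeVec_some, if_pos rfl, ← neg_sub (θ (some (b, i))), Real.cos_neg]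
        ring
      · rw [if_neg hb]
        refine Finset.sum_eq_zero fun i _ => by
          rw [bladeVec_none, bladeVec_some, if_neg hb]
          ring
    rw [Finset.sum_congr rfl fun b _ => hpt b, Finset.sum_ite_eq' Finset.univ a,
      if_pos (Finset.mem_univ a)]
  · have hpt : ∀ b : Fin m,
        (∑ i, ∑ j, Real.cos (θ (some (b, i)) - θ (some (b, j)))
            * (bladeVec a g (some (b, i)) - bladeVec a g (some (b, j)))^2)
        = if b = a then ∑ i, ∑ j, Real.cos (θ (some (a, i)) - θ (some (a, j))) * (g i - g j)^2
          else 0 := by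
      intro b
      by_cases hb : b = a
      · subst hb
        rw [if_pos rfl]
        refine Finset.sum_congr rfl fun i _ => Finset.sum_congr rfl fun j _ => ?_
        simp only [bladeVec_some, if_pos rfl, if_true]
      · rw [if_neg hb]
        refine Finset.sum_eq_zero fun i _ => Finset.sum_eq_zero fun j _ => by
          simp only [bladeVec_some, if_neg hb]
          ring
    rw [Finset.sum_congr rfl fun b _ => hpt b, Finset.sum_ite_eq' Finset.univ a,
      if_pos (Finset.mem_univ a)]

lemma F_nonneg {k m : ℕ} (θ : Option (Fin m × Fin k) → ℝ)
    (hpsd : (kHess (windmill k m) θ).PosSemidef) (x : Option (Fin m × Fin k) → ℝ) :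
    0 ≤ ∑ u, ∑ v, adjW (windmill k m) u v *
        (Real.cos (θ u - θ v) * (x u - x v)^2) := by
  have h := hpsd.dotProduct_mulVec_nonneg x
  rw [star_trivial, qform] at h
  have e : ∑ u, ∑ v, adjW (windmill k m) u v * (Real.cos (θ u - θ v) * (x u - x v)^2)
      = ∑ u, ∑ v, adjW (windmill k m) u v * Real.cos (θ u - θ v) * (x u - x v)^2 := by
    exact Finset.sum_congr rfl fun u _ => Finset.sum_congr rfl fun v _ => by ring
  rw [e]
  linarith

lemma double_sum_dot {k : ℕ} (C S : Fin k → ℝ) :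
    ∑ i, ∑ j, (C i * C j + S i * S j) = (∑ i, C i)^2 + (∑ i, S i)^2 := by
  simp only [Finset.sum_add_distrib]
  rw [← Fintype.sum_mul_sum C C, ← Fintype.sum_mul_sum S S]
  ring

lemma double_sum_dot_sq {k : ℕ} (C S : Fin k → ℝ) :
    ∑ i, ∑ j, (C i * C j + S i * S j)^2
      = (∑ i, C i ^ 2)^2 + (∑ i, S i ^ 2)^2 + 2 * (∑ i, C i * S i)^2 := by
  have e : ∀ i j : Fin k, (C i * C j + S i * S j)^2
      = C i ^2 * C j ^2 + S i ^2 * S j ^2 + 2 * ((C i * S i) * (C j * S j)) := by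
    intro i j; ring
  rw [Finset.sum_congr rfl fun i _ => Finset.sum_congr rfl fun j _ => e i j]
  simp only [Finset.sum_add_distrib, ← Finset.mul_sum, ← Finset.sum_mul]
  ring

lemma blade_ne {k m : ℕ} (θ : Option (Fin m × Fin k) → ℝ)
    (hsosp : IsSOSP (windmill k m) θ) (a : Fin m) :
    (Real.cos (θ none) + ∑ j, Real.cos (θ (some (a, j))))^2
      + (Real.sin (θ none) + ∑ j, Real.sin (θ (some (a, j))))^2 ≠ 0 := by
  intro h0
  set C : Fin k → ℝ := fun i => Real.cos (θ (some (a, i))) with hC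
  set S : Fin k → ℝ := fun i => Real.sin (θ (some (a, i))) with hS
  set Ct : ℝ := Real.cos (θ none) with hCt
  set St : ℝ := Real.sin (θ none) with hSt
  have hu : ∀ i, C i ^ 2 + S i ^ 2 = 1 := by
    intro i
    rw [hC, hS, add_comm]
    exact Real.sin_sq_add_cos_sq _
  have hut : St ^ 2 + Ct ^ 2 = 1 := Real.sin_sq_add_cos_sq _
  have hc : Ct + ∑ j, C j = 0 := by nlinarith [sq_nonneg (Ct + ∑ j, C j), sq_nonneg (St + ∑ j, S j)]
  have hs : St + ∑ j, S j = 0 := by nlinarith [sq_nonneg (Ct + ∑ j, C j), sq_nonneg (St + ∑ j, S j)]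
  have h1 := F_nonneg θ hsosp.2 (bladeVec a S)
  have h2 := F_nonneg θ hsosp.2 (bladeVec a C)
  rw [F_blade_eval θ a S] at h1
  rw [F_blade_eval θ a C] at h2
  have hcen : ∀ i, Real.cos (θ (some (a, i)) - θ none) = C i * Ct + S i * St := fun i =>
    Real.cos_sub _ _
  have hd : ∀ i j, Real.cos (θ (some (a, i)) - θ (some (a, j))) = C i * C j + S i * S j :=
    fun i j => Real.cos_sub _ _
  rw [Finset.sum_congr rfl fun i _ => by rw [hcen i],
    Finset.sum_congr rfl fun i _ => Finset.sum_congr rfl fun j _ => by rw [hd i j]] at h1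
  rw [Finset.sum_congr rfl fun i _ => by rw [hcen i],
    Finset.sum_congr rfl fun i _ => Finset.sum_congr rfl fun j _ => by rw [hd i j]] at h2
  -- combine the two quadratic-form values
  have hcenter : (∑ i, 2 * (C i * Ct + S i * St) * S i ^ 2)
      + (∑ i, 2 * (C i * Ct + S i * St) * C i ^ 2)
      = 2 * Ct * (∑ i, C i) + 2 * St * (∑ i, S i) := by
    rw [← Finset.sum_add_distrib]
    rw [Finset.mul_sum, Finset.mul_sum, ← Finset.sum_add_distrib]
    refine Finset.sum_congr rfl fun i _ => ?_
    linear_combination (2 * (C i * Ct + S i * St)) * hu i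
  have hblade : (∑ i, ∑ j, (C i * C j + S i * S j) * (S i - S j) ^ 2)
      + (∑ i, ∑ j, (C i * C j + S i * S j) * (C i - C j) ^ 2)
      = 2 * ((∑ i, C i)^2 + (∑ i, S i)^2)
        - 2 * ((∑ i, C i ^ 2)^2 + (∑ i, S i ^ 2)^2 + 2 * (∑ i, C i * S i)^2) := by
    rw [← double_sum_dot C S, ← double_sum_dot_sq C S]
    rw [← Finset.sum_add_distrib, Finset.mul_sum, Finset.mul_sum, ← Finset.sum_sub_distrib]
    refine Finset.sum_congr rfl fun i _ => ?_
    rw [← Finset.sum_add_distrib, Finset.mul_sum, Finset.mul_sum, ← Finset.sum_sub_distrib]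
    refine Finset.sum_congr rfl fun j _ => ?_
    linear_combination (C i * C j + S i * S j) * (hu i + hu j)
  -- the sum of squares is nonpositive
  have hS2 : (∑ i, C i ^ 2)^2 + (∑ i, S i ^ 2)^2 + 2 * (∑ i, C i * S i)^2 ≤ 0 := by
    have hCs : (∑ i, C i) = -Ct := by linarith
    have hSs : (∑ i, S i) = -St := by linarith
    rw [hCs, hSs] at hcenter hblade
    linarith [h1, h2, hcenter, hblade]
  have hp : (∑ i, C i ^ 2) = 0 := by
    have : (∑ i, C i ^ 2)^2 = 0 := by nlinarith [sq_nonneg (∑ i, S i ^2), sq_nonneg (∑ i, C i * S i)]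
    exact sq_eq_zero_iff.mp this
  have hq : (∑ i, S i ^ 2) = 0 := by
    have : (∑ i, S i ^ 2)^2 = 0 := by nlinarith [sq_nonneg (∑ i, C i ^2), sq_nonneg (∑ i, C i * S i)]
    exact sq_eq_zero_iff.mp this
  have hCzero : ∀ i, C i = 0 := by
    intro i
    have := (Finset.sum_eq_zero_iff_of_nonneg (fun i _ => sq_nonneg (C i))).mp hp i
      (Finset.mem_univ i)
    exact sq_eq_zero_iff.mp this
  have hSzero : ∀ i, S i = 0 := by
    intro i
    have := (Finset.sum_eq_zero_iff_of_nonneg (fun i _ => sq_nonneg (S i))).mp hq i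
      (Finset.mem_univ i)
    exact sq_eq_zero_iff.mp this
  have hCsum : (∑ i, C i) = 0 := Finset.sum_eq_zero fun i _ => hCzero i
  have hSsum : (∑ i, S i) = 0 := Finset.sum_eq_zero fun i _ => hSzero i
  nlinarith [hut]

lemma pm_classify {k m : ℕ} (θ : Option (Fin m × Fin k) → ℝ)
    (hsosp : IsSOSP (windmill k m) θ) (a : Fin m) (i : Fin k) :
    (Real.cos (θ (some (a, i))) = Real.cos (θ none)
        ∧ Real.sin (θ (some (a, i))) = Real.sin (θ none))
    ∨ (Real.cos (θ (some (a, i))) = -Real.cos (θ none)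
        ∧ Real.sin (θ (some (a, i))) = -Real.sin (θ none)) := by
  have hra := blade_ne θ hsosp a
  have key : ∀ j : Fin k,
      (Real.sin (θ none) + ∑ l, Real.sin (θ (some (a, l)))) * Real.cos (θ (some (a, j)))
        = (Real.cos (θ none) + ∑ l, Real.cos (θ (some (a, l)))) * Real.sin (θ (some (a, j))) :=
    fun j => key_eq θ hsosp.1 a j
  set C : Fin k → ℝ := fun l => Real.cos (θ (some (a, l))) with hC
  set S : Fin k → ℝ := fun l => Real.sin (θ (some (a, l))) with hS
  set Ct : ℝ := Real.cos (θ none) with hCt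
  set St : ℝ := Real.sin (θ none) with hSt
  set Pc : ℝ := Ct + ∑ l, C l with hPc
  set Ps : ℝ := St + ∑ l, S l with hPs
  have hu : C i ^ 2 + S i ^ 2 = 1 := by
    rw [hC, hS, add_comm]; exact Real.sin_sq_add_cos_sq _
  have hut : St ^ 2 + Ct ^ 2 = 1 := Real.sin_sq_add_cos_sq _
  have hsum : Ps * (∑ l, C l) = Pc * (∑ l, S l) := by
    rw [Finset.mul_sum, Finset.mul_sum]
    exact Finset.sum_congr rfl fun j _ => key j
  have keyc : Ps * Ct = Pc * St := by
    rw [hPc, hPs] at hsum ⊢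
    linear_combination -hsum
  have h1 : (S i * Ct - C i * St) * Pc = 0 := by
    linear_combination (-Ct) * key i + C i * keyc
  have h2 : (S i * Ct - C i * St) * Ps = 0 := by
    linear_combination (-St) * key i + S i * keyc
  have h3 : (S i * Ct - C i * St) * (Pc ^ 2 + Ps ^ 2) = 0 := by
    linear_combination Pc * h1 + Ps * h2
  have hcross : S i * Ct - C i * St = 0 := by
    rcases mul_eq_zero.mp h3 with h | h
    · exact h
    · exact absurd h hra
  have hd : ((C i * Ct + S i * St) - 1) * ((C i * Ct + S i * St) + 1) = 0 := by
    linear_combination (St ^ 2 + Ct ^ 2) * hu + hut - (S i * Ct - C i * St) * hcross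
  rcases mul_eq_zero.mp hd with h | h
  · left
    have hd1 : C i * Ct + S i * St = 1 := by linarith
    constructor
    · linear_combination Ct * hd1 + (-St) * hcross + (-(C i)) * hut
    · linear_combination St * hd1 + Ct * hcross + (-(S i)) * hut
  · right
    have hd1 : C i * Ct + S i * St = -1 := by linarith
    constructor
    · linear_combination Ct * hd1 + (-St) * hcross + (-(C i)) * hut
    · linear_combination St * hd1 + Ct * hcross + (-(S i)) * hut

end Helpers

theorem windmill_sosp_synchronous
    (k m : ℕ) (θ : Option (Fin m × Fin k) → ℝ)
    (hsosp : IsSOSP (windmill k m) θ) :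
    ∀ x y, phasor (θ x) = phasor (θ y) := by
  classical
  set Ct : ℝ := Real.cos (θ none) with hCt
  set St : ℝ := Real.sin (θ none) with hSt
  have hut : St ^ 2 + Ct ^ 2 = 1 := Real.sin_sq_add_cos_sq _
  have htwo : ¬(Ct = -Ct ∧ St = -St) := by
    rintro ⟨h1, h2⟩
    have : Ct = 0 := by linarith
    have : St = 0 := by linarith
    nlinarith [hut]
  have claim : ∀ (b : Fin m) (j : Fin k),
      Real.cos (θ (some (b, j))) = Ct ∧ Real.sin (θ (some (b, j))) = St := by
    by_contra hplus
    push_neg at hplus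
    obtain ⟨a, i, hnot⟩ := hplus
    have hm := (pm_classify θ hsosp a i).resolve_left (by
      rintro ⟨h1, h2⟩
      exact hnot h1 h2)
    -- the indicator of the antipodal vertices
    set x : Option (Fin m × Fin k) → ℝ :=
      fun v => if Real.cos (θ v) = -Ct ∧ Real.sin (θ v) = -St then 1 else 0 with hxdef
    have hxval : ∀ v, x v = if Real.cos (θ v) = -Ct ∧ Real.sin (θ v) = -St then 1 else 0 :=
      fun v => rfl
    have hxnone : x none = 0 := by rw [hxval, if_neg htwo]
    have dich : ∀ v, (x v = 0 ∧ Real.cos (θ v) = Ct ∧ Real.sin (θ v) = St)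
        ∨ (x v = 1 ∧ Real.cos (θ v) = -Ct ∧ Real.sin (θ v) = -St) := by
      intro v
      rcases v with _ | ⟨b, j⟩
      · left; exact ⟨hxnone, rfl, rfl⟩
      · rcases pm_classify θ hsosp b j with h | h
        · left
          refine ⟨?_, h.1, h.2⟩
          rw [hxval]
          refine if_neg ?_
          rintro ⟨h1', h2'⟩
          exact htwo ⟨h.1.symm.trans h1', h.2.symm.trans h2'⟩
        · right
          refine ⟨?_, h.1, h.2⟩
          rw [hxval]
          exact if_pos ⟨h.1, h.2⟩
    have hadj_nonneg : ∀ u v, 0 ≤ adjW (windmill k m) u v := by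
      intro u v
      unfold adjW
      split <;> norm_num
    have hterm : ∀ u v, adjW (windmill k m) u v *
        (Real.cos (θ u - θ v) * (x u - x v)^2) ≤ 0 := by
      intro u v
      rcases dich u with hu1 | hu1 <;> rcases dich v with hv1 | hv1
      · rw [hu1.1, hv1.1]; simp
      · have hcos : Real.cos (θ u - θ v) = -1 := by
          rw [Real.cos_sub, hu1.2.1, hu1.2.2, hv1.2.1, hv1.2.2]
          linear_combination -hut
        rw [hu1.1, hv1.1, hcos]
        have he : (-1 : ℝ) * ((0:ℝ) - 1)^2 = -1 := by norm_num
        rw [he]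
        linarith [hadj_nonneg u v]
      · have hcos : Real.cos (θ u - θ v) = -1 := by
          rw [Real.cos_sub, hu1.2.1, hu1.2.2, hv1.2.1, hv1.2.2]
          linear_combination -hut
        rw [hu1.1, hv1.1, hcos]
        have he : (-1 : ℝ) * ((1:ℝ) - 0)^2 = -1 := by norm_num
        rw [he]
        linarith [hadj_nonneg u v]
      · rw [hu1.1, hv1.1]; simp
    have hFx := F_nonneg θ hsosp.2 x
    have hxs : x (some (a, i)) = 1 := by
      rw [hxval]; exact if_pos ⟨hm.1, hm.2⟩
    have hcos_s : Real.cos (θ (some (a, i)) - θ none) = -1 := by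
      rw [Real.cos_sub, hm.1, hm.2]
      linear_combination -hut
    have hgs : (∑ v, adjW (windmill k m) (some (a, i)) v *
        (Real.cos (θ (some (a, i)) - θ v) * (x (some (a, i)) - x v)^2)) ≤ -1 := by
      rw [Fintype.sum_option]
      have h0 : adjW (windmill k m) (some (a, i)) none *
          (Real.cos (θ (some (a, i)) - θ none) * (x (some (a, i)) - x none)^2) = -1 := by
        rw [windmill_adjW_some_none, hcos_s, hxs, hxnone]
        norm_num
      rw [h0]
      have hrest : (∑ p : Fin m × Fin k, adjW (windmill k m) (some (a, i)) (some p) *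
          (Real.cos (θ (some (a, i)) - θ (some p)) * (x (some (a, i)) - x (some p))^2)) ≤ 0 :=
        Finset.sum_nonpos fun p _ => hterm (some (a, i)) (some p)
      linarith
    have hrest2 : (∑ u ∈ Finset.univ.erase (some (a, i)), ∑ v, adjW (windmill k m) u v *
        (Real.cos (θ u - θ v) * (x u - x v)^2)) ≤ 0 :=
      Finset.sum_nonpos fun u _ => Finset.sum_nonpos fun v _ => hterm u v
    have htot := Finset.add_sum_erase Finset.univ
      (fun u => ∑ v, adjW (windmill k m) u v *
        (Real.cos (θ u - θ v) * (x u - x v)^2)) (Finset.mem_univ (some (a, i)))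
    rw [← htot] at hFx
    linarith
  have hall : ∀ v, Real.cos (θ v) = Ct ∧ Real.sin (θ v) = St := by
    intro v
    rcases v with _ | ⟨b, j⟩
    · exact ⟨rfl, rfl⟩
    · exact claim b j
  intro u v
  unfold phasor
  rw [(hall u).1, (hall u).2, (hall v).1, (hall v).2]
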